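/- arXiv:1812.09038 — 2 statements merged into one kernel-verified Lean document; each statement's English description precedes it below -/
import Mathlib

section
/- If ν_s(G(Γ)) = n+m, then Γ is exact satisfiable; moreover, there is a maximum induced matching M of G(Γ) containing, for each i ∈ [n], either u_i f_i or u_i t_i, and the truth assignment t with t(x_i) = 0 if u_i f_i ∈ M and t(x_i) = 1 if u_i t_i ∈ M makes exactly one literal of every clause of Γ true. -/
open SimpleGraph

/-- The subgraph of `G` consisting of those pairs in `s` that are actually edges of `G`. -/
def pairsSubgraph {V : Type*} (G : SimpleGraph V) (s : Set (V × V)) : G.Subgraph where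
  verts := {v | ∃ a b, (G.Adj a b ∧ ((a, b) ∈ s ∨ (b, a) ∈ s)) ∧ (v = a ∨ v = b)}
  Adj a b := G.Adj a b ∧ ((a, b) ∈ s ∨ (b, a) ∈ s)
  adj_sub h := h.1
  edge_vert h := ⟨_, _, h, Or.inl rfl⟩
  symm := ⟨fun _ _ h => ⟨h.1.symm, h.2.symm⟩⟩

/-- `M` is an induced matching in `G`: it is a matching, and `G(M)`, the subgraph of `G`
induced by the set `V(M)` of covered vertices (which is `M.verts` for a matching subgraph),
is `1`-regular, i.e. every vertex of `G(M)` has exactly one neighbour in `G(M)`. -/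
def IsInducedMatching {V : Type*} (G : SimpleGraph V) (M : G.Subgraph) : Prop :=
  M.IsMatching ∧ ∀ v : M.verts, ∃! w : M.verts, (G.induce M.verts).Adj v w

/-- `M` is an acyclic matching in `G`: it is a matching and `G(M)` is a forest. -/
def IsAcyclicMatching {V : Type*} (G : SimpleGraph V) (M : G.Subgraph) : Prop :=
  M.IsMatching ∧ (G.induce M.verts).IsAcyclic

/-- `M` is a uniquely restricted matching in `G`: it is a matching and it is the unique
perfect matching of `G(M)`, i.e. the unique matching of `G` covering exactly `M.verts`. -/
def IsURMatching {V : Type*} (G : SimpleGraph V) (M : G.Subgraph) : Prop :=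
  M.IsMatching ∧ ∀ M' : G.Subgraph, M'.IsMatching → M'.verts = M.verts → M' = M

/-- The (ordinary) matching number `ν(G)`: the maximum cardinality of a matching in `G`. -/
noncomputable def nuMatch {V : Type*} (G : SimpleGraph V) : ℕ :=
  sSup {k : ℕ | ∃ M : G.Subgraph, M.IsMatching ∧ M.edgeSet.ncard = k}

/-- The uniquely restricted matching number `ν_ur(G)`. -/
noncomputable def nuUR {V : Type*} (G : SimpleGraph V) : ℕ :=
  sSup {k : ℕ | ∃ M : G.Subgraph, IsURMatching G M ∧ M.edgeSet.ncard = k}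

/-- The acyclic matching number `ν_ac(G)`. -/
noncomputable def nuAc {V : Type*} (G : SimpleGraph V) : ℕ :=
  sSup {k : ℕ | ∃ M : G.Subgraph, IsAcyclicMatching G M ∧ M.edgeSet.ncard = k}

/-- The induced (strong) matching number `ν_s(G)`. -/
noncomputable def nuS {V : Type*} (G : SimpleGraph V) : ℕ :=
  sSup {k : ℕ | ∃ M : G.Subgraph, IsInducedMatching G M ∧ M.edgeSet.ncard = k}

/-- `cyc` is an `M`-alternating cycle in `G`: a cycle of `G` whose edges alternate between
edges of `M` and edges of `E(G) \ M`. -/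
def IsAltCycle {V : Type*} (G : SimpleGraph V) (M : G.Subgraph) {v : V}
    (cyc : G.Walk v v) : Prop :=
  cyc.IsCycle ∧ cyc.toSubgraph.spanningCoe.IsAlternating M.spanningCoe

/-- Vertices of the graph `G(Γ)` for the EXACT SATISFIABILITY instance `Γ` with `n` variables and
`m` clauses (all literals positive): `Sum.inl (i, 0) = t_i`, `Sum.inl (i, 1) = f_i`,
`Sum.inl (i, 2) = u_i` are the vertices of the star `X_i ≅ K_{1,2}` with centre `u_i`;
`Sum.inr (j, none) = v_j` is the centre of the star `C_j ≅ K_{1,3}` and `Sum.inr (j, some i)` is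
the leaf of `C_j` identified with the literal `x_i` (it is isolated unless `x_i ∈ c_j`). -/
abbrev XSatV (n m : ℕ) : Type := (Fin n × Fin 3) ⊕ (Fin m × Option (Fin n))

/-- The base relation for `G(Γ)`: the star edges `u_i f_i`, `u_i t_i` and `v_j w` for each leaf
`w` of `C_j`; an edge from `f_i` to every vertex of `W` (the leaves identified with the literal
`x_i`), and an edge from `t_i` to every vertex of `W'` (the leaves of those stars `C_j` that meet
`W`, which are not in `W`). -/
def xsatRel {n m : ℕ} (c : Fin m → Finset (Fin n)) : XSatV n m → XSatV n m → Prop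
  | Sum.inl (i, k), Sum.inl (i', k') => i = i' ∧ k = 2 ∧ k' ≠ 2
  | Sum.inr (j, o), Sum.inr (j', o') => j = j' ∧ o = none ∧ ∃ i, o' = some i ∧ i ∈ c j
  | Sum.inl (i, k), Sum.inr (j, o) =>
      (k = 1 ∧ o = some i ∧ i ∈ c j) ∨
      (k = 0 ∧ ∃ i', o = some i' ∧ i' ∈ c j ∧ i ∈ c j ∧ i' ≠ i)
  | Sum.inr _, Sum.inl _ => False

/-- The graph `G(Γ)` built from the EXACT SATISFIABILITY instance `Γ` whose clauses are given
by `c`. -/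
def xsatGraph {n m : ℕ} (c : Fin m → Finset (Fin n)) : SimpleGraph (XSatV n m) :=
  SimpleGraph.fromRel (xsatRel c)

section
variable {n m : ℕ} {c : Fin m → Finset (Fin n)}

def Shape (c : Fin m → Finset (Fin n)) (a b : XSatV n m) : Prop :=
  (∃ (i : Fin n) (k : Fin 3), k ≠ 2 ∧ a = Sum.inl (i,2) ∧ b = Sum.inl (i,k))
  ∨ (∃ (j : Fin m) (i : Fin n), i ∈ c j ∧ a = Sum.inr (j,none) ∧ b = Sum.inr (j, some i))
  ∨ (∃ (i : Fin n) (j : Fin m), i ∈ c j ∧ a = Sum.inl (i,1) ∧ b = Sum.inr (j, some i))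
  ∨ (∃ (i : Fin n) (j : Fin m) (bb : Fin n), bb ∈ c j ∧ i ∈ c j ∧ bb ≠ i ∧
      a = Sum.inl (i,0) ∧ b = Sum.inr (j, some bb))

lemma shape_of_rel {a b : XSatV n m} (h : xsatRel c a b) : Shape c a b := by
  unfold Shape
  rcases a with ⟨i, k⟩ | ⟨j, o⟩ <;> rcases b with ⟨i', k'⟩ | ⟨j', o'⟩ <;>
    simp only [xsatRel] at h
  · obtain ⟨rfl, rfl, hk'⟩ := h
    exact Or.inl ⟨i, k', hk', rfl, rfl⟩
  · rcases h with ⟨rfl, hi, hij⟩ | ⟨rfl, i', rfl, h1, h2, h3⟩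
    · subst hi
      exact Or.inr (Or.inr (Or.inl ⟨i, j', hij, rfl, rfl⟩))
    · exact Or.inr (Or.inr (Or.inr ⟨i, j', i', h1, h2, h3, rfl, rfl⟩))
  · obtain ⟨rfl, rfl, i, rfl, hij⟩ := h
    exact Or.inr (Or.inl ⟨j, i, hij, rfl, rfl⟩)

lemma adj_classify {a b : XSatV n m} (h : (xsatGraph c).Adj a b) :
    Shape c a b ∨ Shape c b a := by
  rw [xsatGraph, fromRel_adj] at h
  exact h.2.imp shape_of_rel shape_of_rel

lemma adj_uf (i : Fin n) : (xsatGraph c).Adj (Sum.inl (i,2)) (Sum.inl (i,1)) := by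
  rw [xsatGraph, fromRel_adj]
  exact ⟨by simp, Or.inl ⟨rfl, rfl, by decide⟩⟩

lemma adj_ut (i : Fin n) : (xsatGraph c).Adj (Sum.inl (i,2)) (Sum.inl (i,0)) := by
  rw [xsatGraph, fromRel_adj]
  exact ⟨by simp, Or.inl ⟨rfl, rfl, by decide⟩⟩

lemma adj_vL {j : Fin m} {i : Fin n} (h : i ∈ c j) :
    (xsatGraph c).Adj (Sum.inr (j, none)) (Sum.inr (j, some i)) := by
  rw [xsatGraph, fromRel_adj]
  exact ⟨by simp, Or.inl ⟨rfl, rfl, i, rfl, h⟩⟩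

lemma adj_fL {j : Fin m} {i : Fin n} (h : i ∈ c j) :
    (xsatGraph c).Adj (Sum.inl (i,1)) (Sum.inr (j, some i)) := by
  rw [xsatGraph, fromRel_adj]
  exact ⟨by simp, Or.inl (Or.inl ⟨rfl, rfl, h⟩)⟩

lemma adj_tL {j : Fin m} {i bb : Fin n} (h1 : bb ∈ c j) (h2 : i ∈ c j) (h3 : bb ≠ i) :
    (xsatGraph c).Adj (Sum.inl (i,0)) (Sum.inr (j, some bb)) := by
  rw [xsatGraph, fromRel_adj]
  exact ⟨by simp, Or.inl (Or.inr ⟨rfl, bb, rfl, h1, h2, h3⟩)⟩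

end

section
variable {n m : ℕ} {c : Fin m → Finset (Fin n)} {M : (xsatGraph c).Subgraph}

lemma partner_unique (hm : M.IsMatching) {a b b' : XSatV n m}
    (h1 : M.Adj a b) (h2 : M.Adj a b') : b = b' :=
  (hm (M.edge_vert h1)).unique h1 h2

lemma mem_of_adj {a b : XSatV n m} (h : M.Adj a b) : b ∈ M.verts :=
  M.edge_vert h.symm

lemma key_induced (hM : IsInducedMatching (xsatGraph c) M) {a b : XSatV n m}
    (ha : a ∈ M.verts) (hb : b ∈ M.verts) (hadj : (xsatGraph c).Adj a b) : M.Adj a b := by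
  obtain ⟨p, hp, -⟩ := hM.1 ha
  have hpv : p ∈ M.verts := mem_of_adj hp
  obtain ⟨w, -, hwu⟩ := hM.2 ⟨a, ha⟩
  have h1 : (⟨b, hb⟩ : M.verts) = w := hwu ⟨b, hb⟩ (by simpa using hadj)
  have h2 : (⟨p, hpv⟩ : M.verts) = w := hwu ⟨p, hpv⟩ (by simpa using M.adj_sub hp)
  have : b = p := by rw [← h2] at h1; exact congrArg Subtype.val h1
  exact this ▸ hp

/-- If `a`'s matching partner is `b`, any covered `G`-neighbour of `a` must be `b`. -/
lemma eq_partner (hM : IsInducedMatching (xsatGraph c) M) {a b x : XSatV n m}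
    (hab : M.Adj a b) (hx : x ∈ M.verts) (hadj : (xsatGraph c).Adj a x) : x = b :=
  partner_unique hM.1 (key_induced hM (M.edge_vert hab) hx hadj) hab

end

section
variable {n m : ℕ} {c : Fin m → Finset (Fin n)} {M : (xsatGraph c).Subgraph}

-- inversion lemmas
lemma adj_u_inv {i i' : Fin n} {k' : Fin 3}
    (h : (xsatGraph c).Adj (Sum.inl (i,2)) (Sum.inl (i',k'))) :
    i' = i ∧ k' ≠ 2 := by
  rw [xsatGraph, fromRel_adj] at h
  obtain ⟨hne, h | h⟩ := h
  · simp only [xsatRel] at h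
    exact ⟨h.1.symm, h.2.2⟩
  · simp only [xsatRel] at h
    exact absurd rfl h.2.2

lemma adj_f_inv {i : Fin n} {j : Fin m} {o : Option (Fin n)}
    (h : (xsatGraph c).Adj (Sum.inl (i,1)) (Sum.inr (j,o))) : o = some i ∧ i ∈ c j := by
  rw [xsatGraph, fromRel_adj] at h
  obtain ⟨hne, h | h⟩ := h
  · simp only [xsatRel] at h
    rcases h with ⟨-, h⟩ | ⟨h, -⟩
    · exact h
    · exact absurd h (by decide)
  · exact h.elim

lemma adj_t_inv {i : Fin n} {j : Fin m} {o : Option (Fin n)}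
    (h : (xsatGraph c).Adj (Sum.inl (i,0)) (Sum.inr (j,o))) :
    ∃ bb, o = some bb ∧ bb ∈ c j ∧ i ∈ c j ∧ bb ≠ i := by
  rw [xsatGraph, fromRel_adj] at h
  obtain ⟨hne, h | h⟩ := h
  · simp only [xsatRel] at h
    rcases h with ⟨h, -⟩ | ⟨-, h⟩
    · exact absurd h (by decide)
    · exact h
  · exact h.elim

lemma adj_v_inv {j j' : Fin m} {o : Option (Fin n)}
    (h : (xsatGraph c).Adj (Sum.inr (j,none)) (Sum.inr (j',o))) :
    j' = j ∧ ∃ i, o = some i ∧ i ∈ c j := by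
  rw [xsatGraph, fromRel_adj] at h
  obtain ⟨hne, h | h⟩ := h
  · simp only [xsatRel] at h
    exact ⟨h.1.symm, h.2.2⟩
  · obtain ⟨i, hi, -⟩ := h.2.2
    exact absurd hi (by simp)

/-- Ownership of an (ordered, primary-first) matched pair by a block. -/
abbrev Owns (M : (xsatGraph c).Subgraph) (a b : XSatV n m) (blk : Fin n ⊕ Fin m) : Prop :=
  (∃ i k, a = Sum.inl (i,2) ∧ b = Sum.inl (i,k) ∧ blk = Sum.inl i)
  ∨ (∃ j o, a = Sum.inr (j,none) ∧ b = Sum.inr (j,o) ∧ blk = Sum.inr j)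
  ∨ (∃ i j, a = Sum.inl (i,1) ∧ b = Sum.inr (j, some i) ∧ blk = Sum.inl i)
  ∨ (∃ i j bb, a = Sum.inl (i,0) ∧ b = Sum.inr (j, some bb) ∧
      M.Adj (Sum.inl (bb,0)) (Sum.inr (j, some i)) ∧ blk = Sum.inl bb)
  ∨ (∃ i j bb, a = Sum.inl (i,0) ∧ b = Sum.inr (j, some bb) ∧
      ¬ M.Adj (Sum.inl (bb,0)) (Sum.inr (j, some i)) ∧ blk = Sum.inr j)

abbrev OwnsE (M : (xsatGraph c).Subgraph) (e : Sym2 (XSatV n m)) (blk : Fin n ⊕ Fin m) : Prop :=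
  ∃ a b, e = s(a,b) ∧ M.Adj a b ∧ Owns M a b blk

lemma exists_ownsE {e : Sym2 (XSatV n m)} (he : e ∈ M.edgeSet) : ∃ blk, OwnsE M e blk := by
  induction e with
  | _ a b =>
    rw [Subgraph.mem_edgeSet] at he
    have hcl := adj_classify (M.adj_sub he)
    -- helper applied to both orientations
    have main : ∀ x y : XSatV n m, M.Adj x y → Shape c x y →
        ∃ blk, ∃ a' b', s(x,y) = s(a', b') ∧ M.Adj a' b' ∧ Owns M a' b' blk := by
      intro x y hxy hsh
      rcases hsh with ⟨i, k, hk, rfl, rfl⟩ | ⟨j, i, hij, rfl, rfl⟩ | ⟨i, j, hij, rfl, rfl⟩ |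
        ⟨i, j, bb, h1, h2, h3, rfl, rfl⟩
      · exact ⟨Sum.inl i, _, _, rfl, hxy, Or.inl ⟨i, k, rfl, rfl, rfl⟩⟩
      · exact ⟨Sum.inr j, _, _, rfl, hxy, Or.inr (Or.inl ⟨j, some i, rfl, rfl, rfl⟩)⟩
      · exact ⟨Sum.inl i, _, _, rfl, hxy, Or.inr (Or.inr (Or.inl ⟨i, j, rfl, rfl, rfl⟩))⟩
      · by_cases hrev : M.Adj (Sum.inl (bb,0)) (Sum.inr (j, some i))
        · exact ⟨Sum.inl bb, _, _, rfl, hxy,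
            Or.inr (Or.inr (Or.inr (Or.inl ⟨i, j, bb, rfl, rfl, hrev, rfl⟩)))⟩
        · exact ⟨Sum.inr j, _, _, rfl, hxy,
            Or.inr (Or.inr (Or.inr (Or.inr ⟨i, j, bb, rfl, rfl, hrev, rfl⟩)))⟩
    rcases hcl with hsh | hsh
    · exact (main a b he hsh).imp fun blk h => h
    · obtain ⟨blk, a', b', heq, h1, h2⟩ := main b a he.symm hsh
      exact ⟨blk, a', b', (Sym2.eq_swap).trans heq, h1, h2⟩

end

section
variable {n m : ℕ} {c : Fin m → Finset (Fin n)} {M : (xsatGraph c).Subgraph}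

lemma int_t_leaf (hM : IsInducedMatching (xsatGraph c) M) {i : Fin n} {k : Fin 3} {j : Fin m}
    {o : Option (Fin n)} (h1 : M.Adj (Sum.inl (i,2)) (Sum.inl (i,k)))
    (h2 : M.Adj (Sum.inl (i,0)) (Sum.inr (j,o))) : False := by
  have htv : (Sum.inl (i,0) : XSatV n m) ∈ M.verts := M.edge_vert h2
  have he := eq_partner hM h1 htv (adj_ut i)
  rw [← he] at h1
  have := partner_unique hM.1 h1.symm h2
  simp at this

lemma int_f_leaf (hM : IsInducedMatching (xsatGraph c) M) {i : Fin n} {k : Fin 3} {j : Fin m}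
    {o : Option (Fin n)} (h1 : M.Adj (Sum.inl (i,2)) (Sum.inl (i,k)))
    (h2 : M.Adj (Sum.inl (i,1)) (Sum.inr (j,o))) : False := by
  have hfv : (Sum.inl (i,1) : XSatV n m) ∈ M.verts := M.edge_vert h2
  have he := eq_partner hM h1 hfv (adj_uf i)
  rw [← he] at h1
  have := partner_unique hM.1 h1.symm h2
  simp at this

lemma f_T_clash (hM : IsInducedMatching (xsatGraph c) M) {i i2 : Fin n} {j j2 : Fin m}
    (hab : M.Adj (Sum.inl (i,1)) (Sum.inr (j, some i)))
    (hab' : M.Adj (Sum.inl (i2,0)) (Sum.inr (j2, some i))) : False := by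
  obtain ⟨bb', hbb', hmem, hmem2, hne⟩ := adj_t_inv (M.adj_sub hab')
  rw [Option.some.injEq] at hbb'
  subst hbb'
  have hlv : (Sum.inr (j2, some i) : XSatV n m) ∈ M.verts := mem_of_adj hab'
  have he := eq_partner hM hab hlv (adj_fL hmem)
  rw [← he] at hab
  have := partner_unique hM.1 hab.symm hab'.symm
  simp only [Sum.inl.injEq, Prod.mk.injEq] at this
  exact absurd this.2 (by decide)

lemma cl_t_clash (hM : IsInducedMatching (xsatGraph c) M) {i2 bb2 : Fin n} {j : Fin m}
    {o : Option (Fin n)} (hab : M.Adj (Sum.inr (j,none)) (Sum.inr (j,o)))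
    (hab' : M.Adj (Sum.inl (i2,0)) (Sum.inr (j, some bb2))) : False := by
  obtain ⟨bb', hbb', hmem, hmem2, hne⟩ := adj_t_inv (M.adj_sub hab')
  rw [Option.some.injEq] at hbb'
  subst hbb'
  have hlv : (Sum.inr (j, some bb2) : XSatV n m) ∈ M.verts := mem_of_adj hab'
  have he := eq_partner hM hab hlv (adj_vL hmem)
  rw [← he] at hab
  have := partner_unique hM.1 hab.symm hab'.symm
  simp at this

lemma ownsE_inj (hM : IsInducedMatching (xsatGraph c) M) {e e' : Sym2 (XSatV n m)}
    {blk : Fin n ⊕ Fin m} (h : OwnsE M e blk) (h' : OwnsE M e' blk) : e = e' := by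
  obtain ⟨a, b, rfl, hab, ho⟩ := h
  obtain ⟨a', b', rfl, hab', ho'⟩ := h'
  rcases ho with ⟨i,k,rfl,rfl,rfl⟩|⟨j,o,rfl,rfl,rfl⟩|⟨i,j,rfl,rfl,rfl⟩|
    ⟨i,j,bb,rfl,rfl,hrev,rfl⟩|⟨i,j,bb,rfl,rfl,hnrev,rfl⟩ <;>
    rcases ho' with ⟨i2,k2,rfl,rfl,hblk⟩|⟨j2,o2,rfl,rfl,hblk⟩|⟨i2,j2,rfl,rfl,hblk⟩|
      ⟨i2,j2,bb2,rfl,rfl,hrev2,hblk⟩|⟨i2,j2,bb2,rfl,rfl,hnrev2,hblk⟩ <;>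
    first
      | exact (Sum.inl_ne_inr hblk).elim
      | exact (Sum.inr_ne_inl hblk).elim
      | skip
  -- (1,1) internal/internal
  · obtain rfl : i = i2 := Sum.inl.inj hblk
    rw [partner_unique hM.1 hab hab']
  -- (1,3) internal/f-cross
  · obtain rfl : i = i2 := Sum.inl.inj hblk
    exact absurd (int_f_leaf hM hab hab') not_false
  -- (1,4) internal/T-cross
  · obtain rfl : i = bb2 := Sum.inl.inj hblk
    exact absurd (int_t_leaf hM hab hrev2) not_false
  -- (2,2) clause/clause
  · obtain rfl : j = j2 := Sum.inr.inj hblk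
    rw [partner_unique hM.1 hab hab']
  -- (2,5) clause/nT-cross
  · obtain rfl : j = j2 := Sum.inr.inj hblk
    exact absurd (cl_t_clash hM hab hab') not_false
  -- (3,1) f-cross/internal
  · obtain rfl : i = i2 := Sum.inl.inj hblk
    exact absurd (int_f_leaf hM hab' hab) not_false
  -- (3,3) f-cross/f-cross
  · obtain rfl : i = i2 := Sum.inl.inj hblk
    rw [partner_unique hM.1 hab hab']
  -- (3,4) f-cross/T-cross
  · obtain rfl : i = bb2 := Sum.inl.inj hblk
    exact absurd (f_T_clash hM hab hab') not_false
  -- (4,1) T-cross/internal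
  · obtain rfl : bb = i2 := Sum.inl.inj hblk
    exact absurd (int_t_leaf hM hab' hrev) not_false
  -- (4,3) T-cross/f-cross
  · obtain rfl : bb = i2 := Sum.inl.inj hblk
    exact absurd (f_T_clash hM hab' hab) not_false
  -- (4,4) T-cross/T-cross
  · obtain rfl : bb = bb2 := Sum.inl.inj hblk
    have := partner_unique hM.1 hrev hrev2
    simp only [Sum.inr.injEq, Prod.mk.injEq, Option.some.injEq] at this
    obtain ⟨rfl, rfl⟩ := this
    rfl
  -- (5,2) nT-cross/clause
  · obtain rfl : j = j2 := Sum.inr.inj hblk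
    exact absurd (cl_t_clash hM hab' hab) not_false
  -- (5,5) nT-cross/nT-cross
  · obtain rfl : j = j2 := Sum.inr.inj hblk
    obtain ⟨bb', hbb', hmem, hmemi, hne⟩ := adj_t_inv (M.adj_sub hab)
    rw [Option.some.injEq] at hbb'; subst hbb'
    obtain ⟨bb2', hbb2', hmem2, hmemi2, hne2⟩ := adj_t_inv (M.adj_sub hab')
    rw [Option.some.injEq] at hbb2'; subst hbb2'
    by_cases hbb : bb2 = bb
    · subst hbb
      have := partner_unique hM.1 hab.symm hab'.symm
      obtain rfl : i = i2 := by simpa using this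
      rfl
    · exfalso
      by_cases hxi : i2 = i
      · subst hxi
        have := partner_unique hM.1 hab hab'
        simp only [Sum.inr.injEq, Prod.mk.injEq, Option.some.injEq] at this
        exact hbb this.2.symm
      · by_cases hb2i : bb2 = i
        · subst hb2i
          by_cases hbi2 : bb = i2
          · subst hbi2
            exact hnrev2 hab
          · have hlv : (Sum.inr (j, some bb) : XSatV n m) ∈ M.verts := mem_of_adj hab
            have he := eq_partner hM hab' hlv (adj_tL hmem hmemi2 hbi2)
            simp only [Sum.inr.injEq, Prod.mk.injEq, Option.some.injEq] at he
            exact hne he.2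
        · have hlv : (Sum.inr (j, some bb2) : XSatV n m) ∈ M.verts := mem_of_adj hab'
          have he := eq_partner hM hab hlv (adj_tL hmem2 hmemi hb2i)
          simp only [Sum.inr.injEq, Prod.mk.injEq, Option.some.injEq] at he
          exact hbb he.2

end

section
variable {n m : ℕ} {c : Fin m → Finset (Fin n)} {M : (xsatGraph c).Subgraph}

lemma fin3_aux : ∀ k : Fin 3, k ≠ 2 → k = 0 ∨ k = 1 := by decide

lemma hit_all (hM : IsInducedMatching (xsatGraph c) M) (hc : M.edgeSet.ncard = n + m) :
    ∀ blk : Fin n ⊕ Fin m, ∃ a b, M.Adj a b ∧ Owns M a b blk := by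
  intro blk
  by_contra hno
  haveI : Nonempty (Fin n ⊕ Fin m) := ⟨blk⟩
  classical
  set hitS : Set (Fin n ⊕ Fin m) := {b' | ∃ a b2, M.Adj a b2 ∧ Owns M a b2 b'} with hhitS
  have hch : ∀ e : Sym2 (XSatV n m), ∃ b', e ∈ M.edgeSet → OwnsE M e b' := by
    intro e
    by_cases he : e ∈ M.edgeSet
    · obtain ⟨b', hb'⟩ := exists_ownsE he
      exact ⟨b', fun _ => hb'⟩
    · exact ⟨blk, fun h => absurd h he⟩
  choose owner howner using hch
  have hmaps : ∀ e ∈ M.edgeSet, owner e ∈ hitS := by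
    intro e he
    obtain ⟨a, b2, -, hab, ho⟩ := howner e he
    exact ⟨a, b2, hab, ho⟩
  have hinj : Set.InjOn owner M.edgeSet := by
    intro e1 h1 e2 h2 heq
    have s1 := howner e1 h1
    rw [heq] at s1
    exact ownsE_inj hM s1 (howner e2 h2)
  have h1 : M.edgeSet.ncard ≤ hitS.ncard :=
    Set.ncard_le_ncard_of_injOn owner hmaps hinj (Set.toFinite _)
  have h2 : hitS.ncard < (Set.univ : Set (Fin n ⊕ Fin m)).ncard := by
    refine Set.ncard_lt_ncard ?_ Set.finite_univ
    refine Set.ssubset_univ_iff.mpr ?_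
    intro hcon
    exact hno (by rw [← Set.mem_setOf_eq (p := fun b' => ∃ a b2, M.Adj a b2 ∧ Owns M a b2 b'),
      ← hhitS, hcon]; trivial)
  rw [Set.ncard_univ] at h2
  simp only [Nat.card_eq_fintype_card, Fintype.card_sum, Fintype.card_fin] at h2
  omega

lemma owns_inl {a b : XSatV n m} {i : Fin n} (hab : M.Adj a b) (h : Owns M a b (Sum.inl i)) :
    (∃ k, M.Adj (Sum.inl (i,2)) (Sum.inl (i,k)))
    ∨ (∃ j, M.Adj (Sum.inl (i,1)) (Sum.inr (j, some i)))
    ∨ (∃ x j, M.Adj (Sum.inl (x,0)) (Sum.inr (j, some i)) ∧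
        M.Adj (Sum.inl (i,0)) (Sum.inr (j, some x))) := by
  rcases h with ⟨i',k,rfl,rfl,hblk⟩|⟨j,o,rfl,rfl,hblk⟩|⟨i',j,rfl,rfl,hblk⟩|
    ⟨i',j,bb,rfl,rfl,hrev,hblk⟩|⟨i',j,bb,rfl,rfl,hnrev,hblk⟩
  · obtain rfl : i = i' := Sum.inl.inj hblk
    exact Or.inl ⟨k, hab⟩
  · exact nomatch hblk
  · obtain rfl : i = i' := Sum.inl.inj hblk
    exact Or.inr (Or.inl ⟨j, hab⟩)
  · obtain rfl : i = bb := Sum.inl.inj hblk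
    exact Or.inr (Or.inr ⟨i', j, hab, hrev⟩)
  · exact nomatch hblk

lemma owns_inr {a b : XSatV n m} {j : Fin m} (hab : M.Adj a b) (h : Owns M a b (Sum.inr j)) :
    (∃ o, M.Adj (Sum.inr (j,none)) (Sum.inr (j,o)))
    ∨ (∃ x bb, M.Adj (Sum.inl (x,0)) (Sum.inr (j, some bb)) ∧
        ¬ M.Adj (Sum.inl (bb,0)) (Sum.inr (j, some x))) := by
  rcases h with ⟨i',k,rfl,rfl,hblk⟩|⟨j',o,rfl,rfl,hblk⟩|⟨i',j',rfl,rfl,hblk⟩|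
    ⟨i',j',bb,rfl,rfl,hrev,hblk⟩|⟨i',j',bb,rfl,rfl,hnrev,hblk⟩
  · exact nomatch hblk
  · obtain rfl : j = j' := Sum.inr.inj hblk
    exact Or.inl ⟨o, hab⟩
  · exact nomatch hblk
  · exact nomatch hblk
  · obtain rfl : j = j' := Sum.inr.inj hblk
    exact Or.inr ⟨i', bb, hab, hnrev⟩

/-- Claim A: no `f`-cross edges in an equality induced matching. -/
lemma claimA (hM : IsInducedMatching (xsatGraph c) M)
    (hhit : ∀ blk : Fin n ⊕ Fin m, ∃ a b, M.Adj a b ∧ Owns M a b blk) :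
    ∀ (i : Fin n) (j : Fin m), ¬ M.Adj (Sum.inl (i,1)) (Sum.inr (j, some i)) := by
  intro i j h
  have hij : i ∈ c j := (adj_f_inv (M.adj_sub h)).2
  have hlv : (Sum.inr (j, some i) : XSatV n m) ∈ M.verts := mem_of_adj h
  obtain ⟨a, b, hab, ho⟩ := hhit (Sum.inr j)
  rcases owns_inr hab ho with ⟨o, hcl⟩ | ⟨x, bb, ht, hnrev⟩
  · have he := eq_partner hM hcl hlv (adj_vL hij)
    rw [← he] at hcl
    have := partner_unique hM.1 hcl.symm h.symm
    simp at this
  · obtain ⟨bb', hbb', hmembb, hmemx, hnexbb⟩ := adj_t_inv (M.adj_sub ht)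
    rw [Option.some.injEq] at hbb'; subst hbb'
    by_cases hbi : bb = i
    · subst hbi
      have := partner_unique hM.1 ht.symm h.symm
      simp only [Sum.inl.injEq, Prod.mk.injEq] at this
      exact absurd this.2 (by decide)
    · by_cases hxi : x = i
      · obtain ⟨a2, b2, hab2, ho2⟩ := hhit (Sum.inl bb)
        rcases owns_inl hab2 ho2 with ⟨k, hint⟩ | ⟨j', hf⟩ | ⟨x2, j2, hT1, hT2⟩
        · have hk := (adj_u_inv (M.adj_sub hint)).2
          rcases fin3_aux k hk with rfl | rfl
          · -- t_bb covered, adjacent to covered leaf (j, some i)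
            have hadjt : (xsatGraph c).Adj (Sum.inl (bb,0)) (Sum.inr (j, some i)) :=
              adj_tL hij hmembb (fun hh => hbi hh.symm)
            have hkey := key_induced hM (mem_of_adj hint) hlv hadjt
            exact int_t_leaf hM hint hkey
          · -- f_bb covered, adjacent to covered leaf (j, some bb)
            have hadjf : (xsatGraph c).Adj (Sum.inl (bb,1)) (Sum.inr (j, some bb)) :=
              adj_fL hmembb
            have hkey := key_induced hM (mem_of_adj hint) (mem_of_adj ht) hadjf
            exact int_f_leaf hM hint hkey
        · -- f-cross at bb
          have hadjf : (xsatGraph c).Adj (Sum.inl (bb,1)) (Sum.inr (j, some bb)) :=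
            adj_fL hmembb
          have he := eq_partner hM hf (mem_of_adj ht) hadjf
          rw [← he] at hf
          have := partner_unique hM.1 ht.symm hf.symm
          simp only [Sum.inl.injEq, Prod.mk.injEq] at this
          exact absurd this.2 (by decide)
        · -- T-cross with reverse at bb : t_bb covered
          have hadjt : (xsatGraph c).Adj (Sum.inl (bb,0)) (Sum.inr (j, some i)) :=
            adj_tL hij hmembb (fun hh => hbi hh.symm)
          have hkey := key_induced hM (M.edge_vert hT2) hlv hadjt
          have := partner_unique hM.1 hkey.symm h.symm
          simp only [Sum.inl.injEq, Prod.mk.injEq] at this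
          exact absurd this.2 (by decide)
      · -- x ≠ i and bb ≠ i
        have hadjt : (xsatGraph c).Adj (Sum.inl (x,0)) (Sum.inr (j, some i)) :=
          adj_tL hij hmemx (fun hh => hxi hh.symm)
        have he := eq_partner hM ht hlv hadjt
        simp only [Sum.inr.injEq, Prod.mk.injEq, Option.some.injEq] at he
        exact hbi he.2.symm

/-- Claim B: no `t`-cross edges in an equality induced matching. -/
lemma claimB (hM : IsInducedMatching (xsatGraph c) M)
    (hhit : ∀ blk : Fin n ⊕ Fin m, ∃ a b, M.Adj a b ∧ Owns M a b blk) :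
    ∀ (i bb : Fin n) (j : Fin m), ¬ M.Adj (Sum.inl (i,0)) (Sum.inr (j, some bb)) := by
  intro i bb j h
  obtain ⟨bb', hbb', hmembb, hmemi, hnebbi⟩ := adj_t_inv (M.adj_sub h)
  rw [Option.some.injEq] at hbb'; subst hbb'
  by_cases hrev : M.Adj (Sum.inl (bb,0)) (Sum.inr (j, some i))
  · obtain ⟨a, b, hab, ho⟩ := hhit (Sum.inr j)
    rcases owns_inr hab ho with ⟨o, hcl⟩ | ⟨x, yy, ht, hnrev2⟩
    · have he := eq_partner hM hcl (mem_of_adj h) (adj_vL hmembb)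
      rw [← he] at hcl
      have := partner_unique hM.1 hcl.symm h.symm
      simp at this
    · obtain ⟨yy', hyy', hmemyy, hmemx, hneyx⟩ := adj_t_inv (M.adj_sub ht)
      rw [Option.some.injEq] at hyy'; subst hyy'
      by_cases hyb : yy = bb
      · subst hyb
        have := partner_unique hM.1 ht.symm h.symm
        simp only [Sum.inl.injEq, Prod.mk.injEq] at this
        obtain rfl : x = i := this.1
        exact hnrev2 hrev
      · by_cases hyi : yy = i
        · subst hyi
          have := partner_unique hM.1 ht.symm hrev.symm
          simp only [Sum.inl.injEq, Prod.mk.injEq] at this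
          obtain rfl : x = bb := this.1
          exact hnrev2 h
        · by_cases hxb : x = bb
          · subst hxb
            have := partner_unique hM.1 hrev ht
            simp only [Sum.inr.injEq, Prod.mk.injEq, Option.some.injEq] at this
            exact hyi this.2.symm
          · have hadjt : (xsatGraph c).Adj (Sum.inl (x,0)) (Sum.inr (j, some bb)) :=
              adj_tL hmembb hmemx (fun hh => hxb hh.symm)
            have he := eq_partner hM ht (mem_of_adj h) hadjt
            simp only [Sum.inr.injEq, Prod.mk.injEq, Option.some.injEq] at he
            exact hyb he.2.symm
  · obtain ⟨a, b, hab, ho⟩ := hhit (Sum.inl i)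
    rcases owns_inl hab ho with ⟨k, hint⟩ | ⟨j', hf⟩ | ⟨x2, j2, hT1, hT2⟩
    · exact int_t_leaf hM hint h
    · exact claimA hM hhit i j' hf
    · have := partner_unique hM.1 h hT2
      simp only [Sum.inr.injEq, Prod.mk.injEq, Option.some.injEq] at this
      obtain ⟨rfl, rfl⟩ := this
      exact hrev hT1

end

section
variable {n m : ℕ} {c : Fin m → Finset (Fin n)} {M : (xsatGraph c).Subgraph}

lemma internal_all (hM : IsInducedMatching (xsatGraph c) M)
    (hhit : ∀ blk : Fin n ⊕ Fin m, ∃ a b, M.Adj a b ∧ Owns M a b blk) (i : Fin n) :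
    M.Adj (Sum.inl (i,2)) (Sum.inl (i,1)) ∨ M.Adj (Sum.inl (i,2)) (Sum.inl (i,0)) := by
  obtain ⟨a, b, hab, ho⟩ := hhit (Sum.inl i)
  rcases owns_inl hab ho with ⟨k, hint⟩ | ⟨j', hf⟩ | ⟨x2, j2, hT1, hT2⟩
  · rcases fin3_aux k (adj_u_inv (M.adj_sub hint)).2 with rfl | rfl
    · exact Or.inr hint
    · exact Or.inl hint
  · exact absurd hf (claimA hM hhit i j')
  · exact absurd hT2 (claimB hM hhit i x2 j2)

lemma clause_all (hM : IsInducedMatching (xsatGraph c) M)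
    (hhit : ∀ blk : Fin n ⊕ Fin m, ∃ a b, M.Adj a b ∧ Owns M a b blk) (j : Fin m) :
    ∃ i0, i0 ∈ c j ∧ M.Adj (Sum.inr (j, none)) (Sum.inr (j, some i0)) := by
  obtain ⟨a, b, hab, ho⟩ := hhit (Sum.inr j)
  rcases owns_inr hab ho with ⟨o, hcl⟩ | ⟨x, bb, ht, -⟩
  · obtain ⟨-, i0, rfl, hmem⟩ := adj_v_inv (M.adj_sub hcl)
    exact ⟨i0, hmem, hcl⟩
  · exact absurd ht (claimB hM hhit x bb j)

lemma exactly_one (hM : IsInducedMatching (xsatGraph c) M)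
    (hhit : ∀ blk : Fin n ⊕ Fin m, ∃ a b, M.Adj a b ∧ Owns M a b blk) (j : Fin m) :
    ∃! i, i ∈ c j ∧ M.Adj (Sum.inl (i,2)) (Sum.inl (i,0)) := by
  obtain ⟨i0, hmem0, hcl⟩ := clause_all hM hhit j
  have hlv : (Sum.inr (j, some i0) : XSatV n m) ∈ M.verts := mem_of_adj hcl
  have htrue : M.Adj (Sum.inl (i0,2)) (Sum.inl (i0,0)) := by
    rcases internal_all hM hhit i0 with huf | hut
    · exfalso
      have hkey := key_induced hM (mem_of_adj huf) hlv (adj_fL hmem0)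
      have := partner_unique hM.1 hkey.symm hcl.symm
      simp at this
    · exact hut
  refine ⟨i0, ⟨hmem0, htrue⟩, ?_⟩
  rintro i' ⟨hmem', hut'⟩
  by_contra hne
  have hadjt : (xsatGraph c).Adj (Sum.inl (i',0)) (Sum.inr (j, some i0)) :=
    adj_tL hmem0 hmem' (fun hh => hne hh.symm)
  have hkey := key_induced hM (mem_of_adj hut') hlv hadjt
  have := partner_unique hM.1 hkey.symm hcl.symm
  simp at this

end


/-- If `ν_s(G(Γ)) = n + m`, then `Γ` is exact satisfiable; moreover, there is a maximum induced
matching `M` of `G(Γ)` containing, for each `i ∈ [n]`, either `u_i f_i` or `u_i t_i`, and the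
truth assignment `t` with `t(x_i) = 0` if `u_i f_i ∈ M` and `t(x_i) = 1` if `u_i t_i ∈ M` makes
exactly one literal of every clause of `Γ` true. -/
theorem exactSatisfiable_of_nuS_eq {n m : ℕ} (c : Fin m → Finset (Fin n))
    (hcard : ∀ j, (c j).card = 3)
    (hocc : ∀ i : Fin n, (Finset.univ.filter fun j => i ∈ c j).card ≤ 3)
    (hs : nuS (xsatGraph c) = n + m) :
    (∃ t : Fin n → Bool, ∀ j, ∃! i, i ∈ c j ∧ t i = true) ∧
    ∃ M : (xsatGraph c).Subgraph, IsInducedMatching (xsatGraph c) M ∧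
      M.edgeSet.ncard = nuS (xsatGraph c) ∧
      (∀ i : Fin n,
        M.Adj (Sum.inl (i, 2)) (Sum.inl (i, 1)) ∨ M.Adj (Sum.inl (i, 2)) (Sum.inl (i, 0))) ∧
      ∃ t : Fin n → Bool,
        (∀ i : Fin n, (t i = false ↔ M.Adj (Sum.inl (i, 2)) (Sum.inl (i, 1))) ∧
          (t i = true ↔ M.Adj (Sum.inl (i, 2)) (Sum.inl (i, 0)))) ∧
        ∀ j, ∃! i, i ∈ c j ∧ t i = true := by
  classical
  have hmem : n + m ∈ {k : ℕ | ∃ M : (xsatGraph c).Subgraph,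
      IsInducedMatching (xsatGraph c) M ∧ M.edgeSet.ncard = k} := by
    rw [← hs]
    refine Nat.sSup_mem ⟨0, ⊥, ⟨?_, ?_⟩, by simp⟩
      ⟨Nat.card (Sym2 (XSatV n m)), ?_⟩
    · intro v hv
      simp [Subgraph.verts_bot] at hv
    · rintro ⟨v, hv⟩
      rw [Subgraph.verts_bot] at hv
      exact absurd hv (Set.notMem_empty v)
    · rintro k ⟨M, -, hk⟩
      rw [← hk, ← Set.ncard_univ]
      exact Set.ncard_le_ncard (Set.subset_univ _) Set.finite_univ
  obtain ⟨M, hM, hc⟩ := hmem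
  have hhit := hit_all hM hc
  set t : Fin n → Bool := fun i => decide (M.Adj (Sum.inl (i,2)) (Sum.inl (i,0))) with htdef
  have ht : ∀ i, t i = true ↔ M.Adj (Sum.inl (i,2)) (Sum.inl (i,0)) := by
    intro i; simp [htdef]
  have hf : ∀ i, t i = false ↔ M.Adj (Sum.inl (i,2)) (Sum.inl (i,1)) := by
    intro i
    rw [← Bool.not_eq_true, ht i]
    constructor
    · intro hnot
      rcases internal_all hM hhit i with h | h
      · exact h
      · exact absurd h hnot
    · intro huf hut
      have := partner_unique hM.1 huf hut
      simp only [Sum.inl.injEq, Prod.mk.injEq] at this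
      exact absurd this.2 (by decide)
  have heo : ∀ j, ∃! i, i ∈ c j ∧ t i = true := by
    intro j
    obtain ⟨i0, hi0, hu⟩ := exactly_one hM hhit j
    exact ⟨i0, ⟨hi0.1, (ht i0).mpr hi0.2⟩, fun y hy => hu y ⟨hy.1, (ht y).mp hy.2⟩⟩
  exact ⟨⟨t, heo⟩, M, hM, hc.trans hs.symm, internal_all hM hhit, t,
    fun i => ⟨hf i, ht i⟩, heo⟩
end

section
/- Let G be a graph, M a matching in G, e = uv an edge of M, and f = u'v an edge of G not in M with u' not covered by M. Then M' = (M ∪ {u'v}) \ {uv} is a matching in G, and if M' is not uniquely restricted but M is uniquely restricted, then every M'-alternating cycle of G passes through the edge u'v. -/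
open SimpleGraph

/-- The matching `M' = (M ∪ {u'v}) \ {uv}`. -/
def swapMatching {V : Type*} (G : SimpleGraph V) (M : G.Subgraph) (u v u' : V) : G.Subgraph :=
  pairsSubgraph G {p | (M.Adj p.1 p.2 ∧ s(p.1, p.2) ≠ s(u, v)) ∨ p = (u', v)}


private lemma walk_exists_edge_at_end {V : Type*} {G : SimpleGraph V} :
    ∀ {a x : V} (q : G.Walk a x), a ≠ x → ∃ y, s(x, y) ∈ q.edges := by
  intro a x q
  induction q with
  | nil => exact fun h => absurd rfl h
  | @cons a c x h r ih =>
    intro _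
    by_cases hcx : c = x
    · subst hcx
      exact ⟨a, by simp [Sym2.eq_swap]⟩
    · obtain ⟨y, hy⟩ := ih hcx
      exact ⟨y, by simp [hy]⟩

private lemma path_unique_edge_at_end {V : Type*} {G : SimpleGraph V} :
    ∀ {a x : V} (q : G.Walk a x), q.IsPath → ∀ {y z : V},
      s(x, y) ∈ q.edges → s(x, z) ∈ q.edges → y = z := by
  intro a x q
  induction q with
  | nil => intro _ y z hy _; simp at hy
  | @cons a c x h r ih =>
    intro hp y z hy hz
    rw [SimpleGraph.Walk.cons_isPath_iff] at hp
    obtain ⟨hr, ha⟩ := hp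
    have hax : x ≠ a := fun hxa => ha (hxa ▸ r.end_mem_support)
    simp only [SimpleGraph.Walk.edges_cons, List.mem_cons] at hy hz
    rcases hy with hy | hy <;> rcases hz with hz | hz
    · rw [Sym2.eq_iff] at hy hz
      rcases hy with ⟨h1, _⟩ | ⟨_, hy⟩
      · exact absurd h1 hax
      rcases hz with ⟨h1, _⟩ | ⟨_, hz⟩
      · exact absurd h1 hax
      rw [hy, hz]
    · rw [Sym2.eq_iff] at hy
      rcases hy with ⟨h1, _⟩ | ⟨hxc, _⟩
      · exact absurd h1 hax
      subst hxc
      rw [SimpleGraph.Walk.isPath_iff_eq_nil.mp hr] at hz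
      simp at hz
    · rw [Sym2.eq_iff] at hz
      rcases hz with ⟨h1, _⟩ | ⟨hxc, _⟩
      · exact absurd h1 hax
      subst hxc
      rw [SimpleGraph.Walk.isPath_iff_eq_nil.mp hr] at hy
      simp at hy
    · exact ih hr hy hz

private lemma cycle_two_edges_at_base {V : Type*} {G : SimpleGraph V} {x : V}
    (c : G.Walk x x) (hc : c.IsCycle) :
    ∃ b y, b ≠ y ∧ s(x, b) ∈ c.edges ∧ s(x, y) ∈ c.edges ∧
      ∀ w, s(x, w) ∈ c.edges → w = b ∨ w = y := by
  cases c with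
  | nil => exact absurd hc SimpleGraph.Walk.IsCycle.not_of_nil
  | @cons _ b _ h q =>
    rw [SimpleGraph.Walk.cons_isCycle_iff] at hc
    obtain ⟨hq, hxb⟩ := hc
    have hbx : b ≠ x := h.ne'
    obtain ⟨y, hy⟩ := walk_exists_edge_at_end q hbx
    have hyb : y ≠ b := fun hyb => hxb (hyb ▸ hy)
    refine ⟨b, y, hyb.symm, by simp, by simp [hy], ?_⟩
    intro w hw
    simp only [SimpleGraph.Walk.edges_cons, List.mem_cons] at hw
    rcases hw with hw | hw
    · rw [Sym2.eq_iff] at hw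
      rcases hw with ⟨_, hw⟩ | ⟨hxb', _⟩
      · exact Or.inl hw
      · exact absurd hxb'.symm hbx
    · exact Or.inr (path_unique_edge_at_end q hq hw hy)

private lemma cycle_two_edges_at {V : Type*} {G : SimpleGraph V} {x₀ : V}
    (c : G.Walk x₀ x₀) (hc : c.IsCycle) {x : V} (hx : x ∈ c.support) :
    ∃ b y, b ≠ y ∧ s(x, b) ∈ c.edges ∧ s(x, y) ∈ c.edges ∧
      ∀ w, s(x, w) ∈ c.edges → w = b ∨ w = y := by
  classical
  obtain ⟨b, y, hby, hb, hy, huniq⟩ := cycle_two_edges_at_base (c.rotate x hx) (hc.rotate hx)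
  have he : ∀ e, e ∈ (c.rotate x hx).edges ↔ e ∈ c.edges :=
    fun e => (SimpleGraph.Walk.rotate_edges c x hx).mem_iff
  exact ⟨b, y, hby, (he _).mp hb, (he _).mp hy, fun w hw => huniq w ((he _).mpr hw)⟩

lemma swapMatching_adj' {V : Type*} {G : SimpleGraph V} {M : G.Subgraph} {u v u' : V}
    (hf : G.Adj u' v) {a b : V} :
    (swapMatching G M u v u').Adj a b ↔
      (M.Adj a b ∧ s(a, b) ≠ s(u, v)) ∨ s(a, b) = s(u', v) := by
  show G.Adj a b ∧ _ ↔ _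
  simp only [Set.mem_setOf_eq]
  constructor
  · rintro ⟨hG, (h | h) | (h | h)⟩
    · exact Or.inl h
    · simp only [Prod.mk.injEq] at h
      obtain ⟨rfl, rfl⟩ := h
      exact Or.inr rfl
    · obtain ⟨h1, h2⟩ := h
      rw [Sym2.eq_swap] at h2
      exact Or.inl ⟨h1.symm, h2⟩
    · simp only [Prod.mk.injEq] at h
      obtain ⟨rfl, rfl⟩ := h
      exact Or.inr (Sym2.eq_swap)
  · rintro (⟨hM, hne⟩ | hs)
    · exact ⟨M.adj_sub hM, Or.inl (Or.inl ⟨hM, hne⟩)⟩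
    · rw [Sym2.eq_iff] at hs
      rcases hs with ⟨rfl, rfl⟩ | ⟨rfl, rfl⟩
      · exact ⟨hf, Or.inl (Or.inr rfl)⟩
      · exact ⟨hf.symm, Or.inr (Or.inr rfl)⟩

/-- Let `G` be a graph, `M` a matching in `G`, `e = uv` an edge of `M`, and `f = u'v` an edge of
`G` not in `M` with `u'` not covered by `M`. Then `M' = (M ∪ {u'v}) \ {uv}` is a matching in `G`,
and if `M'` is not uniquely restricted but `M` is uniquely restricted, then every `M'`-alternating
cycle of `G` passes through the edge `u'v`. -/
theorem swapMatching_isMatching_and_altCycle_through_new_edge {V : Type*} (G : SimpleGraph V)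
    (M : G.Subgraph) (hM : M.IsMatching) (u v u' : V) (huv : M.Adj u v) (hf : G.Adj u' v)
    (hfM : ¬ M.Adj u' v) (hu' : u' ∉ M.verts) :
    (swapMatching G M u v u').IsMatching ∧
      (IsURMatching G M → ¬ IsURMatching G (swapMatching G M u v u') →
        ∀ (w : V) (cyc : G.Walk w w), IsAltCycle G (swapMatching G M u v u') cyc →
          s(u', v) ∈ cyc.edges) := by
  classical
  set M' := swapMatching G M u v u' with hM'def
  have hadj : ∀ {a b : V}, M'.Adj a b ↔ (M.Adj a b ∧ s(a, b) ≠ s(u, v)) ∨ s(a, b) = s(u', v) :=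
    fun {a b} => swapMatching_adj' hf
  have huvne : u ≠ v := huv.ne
  have hu'v : u' ≠ v := hf.ne
  have hu'u : u' ≠ u := fun h => hu' (h ▸ M.edge_vert huv)
  have humem : u ∈ M.verts := M.edge_vert huv
  have hMu : ∀ {z}, M.Adj u z → z = v := by
    intro z hz
    obtain ⟨w, _, hwuniq⟩ := hM humem
    rw [hwuniq z hz, hwuniq v huv]
  have hMv : ∀ {z}, M.Adj v z → z = u := by
    intro z hz
    obtain ⟨w, _, hwuniq⟩ := hM (M.edge_vert huv.symm)
    rw [hwuniq z hz, hwuniq u huv.symm]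
  have hMu' : ∀ {z}, ¬ M.Adj u' z := fun hz => hu' (M.edge_vert hz)
  have hM'u' : ∀ {z}, M'.Adj u' z → z = v := by
    intro z hz
    rcases hadj.mp hz with ⟨h, _⟩ | h
    · exact absurd h hMu'
    · rw [Sym2.eq_iff] at h
      rcases h with ⟨_, rfl⟩ | ⟨h, _⟩
      · rfl
      · exact absurd h hu'v
  have hM'v : ∀ {z}, M'.Adj v z → z = u' := by
    intro z hz
    rcases hadj.mp hz with ⟨h, hne⟩ | h
    · exact absurd (by rw [hMv h]; exact Sym2.eq_swap) hne
    · rw [Sym2.eq_iff] at h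
      rcases h with ⟨h, _⟩ | ⟨_, rfl⟩
      · exact absurd h.symm hu'v
      · rfl
  have hM'u : ∀ {z}, ¬ M'.Adj u z := by
    intro z hz
    rcases hadj.mp hz with ⟨h, hne⟩ | h
    · exact hne (by rw [hMu h])
    · rw [Sym2.eq_iff] at h
      rcases h with ⟨h, _⟩ | ⟨h, _⟩
      · exact hu'u h.symm
      · exact huvne h
  have hM'other : ∀ {x z}, x ≠ u' → x ≠ v → M'.Adj x z → M.Adj x z := by
    intro x z hxu' hxv hz
    rcases hadj.mp hz with ⟨h, _⟩ | h
    · exact h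
    · rw [Sym2.eq_iff] at h
      rcases h with ⟨h, _⟩ | ⟨h, _⟩
      · exact absurd h hxu'
      · exact absurd h hxv
  have hM'vu' : M'.Adj u' v := hadj.mpr (Or.inr rfl)
  have hpartner : ∀ {x z : V}, M'.Adj x z → ∃! y, M'.Adj x y := by
    intro x z hxz
    by_cases hx1 : x = u'
    · subst hx1; exact ⟨v, hM'vu', fun y hy => hM'u' hy⟩
    by_cases hx2 : x = v
    · subst hx2; exact ⟨u', hM'vu'.symm, fun y hy => hM'v hy⟩
    have hxz' : M.Adj x z := hM'other hx1 hx2 hxz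
    refine ⟨z, hxz, fun y hy => ?_⟩
    have hy' : M.Adj x y := hM'other hx1 hx2 hy
    obtain ⟨w, _, hwuniq⟩ := hM (M.edge_vert hxz')
    rw [hwuniq y hy', hwuniq z hxz']
  have hmatch : M'.IsMatching := by
    intro x hx
    obtain ⟨a, b, hab, hx⟩ := hx
    have hab' : M'.Adj a b := hab
    rcases hx with rfl | rfl
    · exact hpartner hab'
    · exact hpartner hab'.symm
  refine ⟨hmatch, ?_⟩
  rintro hUR - w cyc ⟨hcyc, halt⟩
  by_contra hnotin
  have hC : ∀ {a b : V}, cyc.toSubgraph.Adj a b ↔ s(a, b) ∈ cyc.edges := by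
    intro a b
    rw [← SimpleGraph.Walk.mem_edges_toSubgraph, Subgraph.mem_edgeSet]
  have hCsupp : ∀ {a b : V}, s(a, b) ∈ cyc.edges → a ∈ cyc.support :=
    fun {a b} h => cyc.fst_mem_support_of_mem_edges h
  have halt' : ∀ {a b b' : V}, b ≠ b' → s(a, b) ∈ cyc.edges → s(a, b') ∈ cyc.edges →
      (M'.Adj a b ↔ ¬ M'.Adj a b') := by
    intro a b b' hne hb hb'
    have := halt hne (by simpa using hC.mpr hb) (by simpa using hC.mpr hb')
    simpa using this
  have hu'supp : u' ∉ cyc.support := by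
    intro hs
    obtain ⟨b, y, hby, hb, hy, _⟩ := cycle_two_edges_at cyc hcyc hs
    have h1 : ¬ M'.Adj u' b := fun h => hnotin ((hM'u' h) ▸ hb)
    have h2 : ¬ M'.Adj u' y := fun h => hnotin ((hM'u' h) ▸ hy)
    exact h1 ((halt' hby hb hy).mpr h2)
  have hvsupp : v ∉ cyc.support := by
    intro hs
    obtain ⟨b, y, hby, hb, hy, _⟩ := cycle_two_edges_at cyc hcyc hs
    have h1 : ¬ M'.Adj v b :=
      fun h => hu'supp ((hM'v h) ▸ cyc.snd_mem_support_of_mem_edges hb)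
    have h2 : ¬ M'.Adj v y :=
      fun h => hu'supp ((hM'v h) ▸ cyc.snd_mem_support_of_mem_edges hy)
    exact h1 ((halt' hby hb hy).mpr h2)
  have husupp : u ∉ cyc.support := by
    intro hs
    obtain ⟨b, y, hby, hb, hy, _⟩ := cycle_two_edges_at cyc hcyc hs
    exact hM'u ((halt' hby hb hy).mpr hM'u)
  have htrans : ∀ {a b : V}, a ∈ cyc.support → b ∈ cyc.support → (M'.Adj a b ↔ M.Adj a b) := by
    intro a b ha hb
    have hau : a ≠ u := fun h => husupp (h ▸ ha)
    have hav : a ≠ v := fun h => hvsupp (h ▸ ha)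
    have hau' : a ≠ u' := fun h => hu'supp (h ▸ ha)
    constructor
    · exact hM'other hau' hav
    · intro h
      refine hadj.mpr (Or.inl ⟨h, fun hcon => ?_⟩)
      rw [Sym2.eq_iff] at hcon
      rcases hcon with ⟨h1, _⟩ | ⟨h1, _⟩
      · exact hau h1
      · exact hav h1
  have haltM : ∀ {a b b' : V}, b ≠ b' → s(a, b) ∈ cyc.edges → s(a, b') ∈ cyc.edges →
      (M.Adj a b ↔ ¬ M.Adj a b') := by
    intro a b b' hne hb hb'
    have ha := hCsupp hb
    have hbs := cyc.snd_mem_support_of_mem_edges hb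
    have hbs' := cyc.snd_mem_support_of_mem_edges hb'
    rw [← htrans ha hbs, ← htrans ha hbs']
    exact halt' hne hb hb'
  have hsupportM : ∀ {x : V}, x ∈ cyc.support → ∃ b, s(x, b) ∈ cyc.edges ∧ M.Adj x b := by
    intro x hx
    obtain ⟨b, y, hby, hb, hy, _⟩ := cycle_two_edges_at cyc hcyc hx
    by_cases h : M.Adj x b
    · exact ⟨b, hb, h⟩
    · exact ⟨y, hy, not_not.mp (fun hy' => h ((haltM hby hb hy).mpr hy'))⟩
  let N : G.Subgraph :=
    { verts := M.verts
      Adj := fun a b => (M.Adj a b ∧ s(a, b) ∉ cyc.edges) ∨ (s(a, b) ∈ cyc.edges ∧ ¬ M.Adj a b)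
      adj_sub := by
        rintro a b (⟨h, _⟩ | ⟨h, _⟩)
        · exact M.adj_sub h
        · exact cyc.toSubgraph.adj_sub (hC.mpr h)
      edge_vert := by
        rintro a b (⟨h, _⟩ | ⟨h, _⟩)
        · exact M.edge_vert h
        · obtain ⟨c', _, hc'⟩ := hsupportM (hCsupp h)
          exact M.edge_vert hc'
      symm := by
        constructor
        rintro a b (⟨h, h2⟩ | ⟨h, h2⟩)
        · exact Or.inl ⟨h.symm, by rwa [Sym2.eq_swap]⟩
        · exact Or.inr ⟨by rwa [Sym2.eq_swap] at h, fun h' => h2 h'.symm⟩ }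
  have hNadj : ∀ a b : V, N.Adj a b ↔
      (M.Adj a b ∧ s(a, b) ∉ cyc.edges) ∨ (s(a, b) ∈ cyc.edges ∧ ¬ M.Adj a b) :=
    fun a b => Iff.rfl
  have hNmatch : N.IsMatching := by
    intro x hx
    by_cases hxs : x ∈ cyc.support
    · obtain ⟨b, y, hby, hb, hy, huniq⟩ := cycle_two_edges_at cyc hcyc hxs
      have hiff := haltM hby hb hy
      by_cases hmb : M.Adj x b
      · have hmy : ¬ M.Adj x y := hiff.mp hmb
        refine ⟨y, (hNadj _ _).mpr (Or.inr ⟨hy, hmy⟩), ?_⟩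
        intro z hz
        rcases (hNadj _ _).mp hz with ⟨hz1, hz2⟩ | ⟨hz1, hz2⟩
        · obtain ⟨w', _, hwuniq⟩ := hM (M.edge_vert hz1)
          have hzb : z = b := by rw [hwuniq z hz1, hwuniq b hmb]
          exact absurd hb (hzb ▸ hz2)
        · rcases huniq z hz1 with rfl | rfl
          · exact absurd hmb hz2
          · rfl
      · have hmy : M.Adj x y := not_not.mp (fun h => hmb (hiff.mpr h))
        refine ⟨b, (hNadj _ _).mpr (Or.inr ⟨hb, hmb⟩), ?_⟩
        intro z hz
        rcases (hNadj _ _).mp hz with ⟨hz1, hz2⟩ | ⟨hz1, hz2⟩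
        · obtain ⟨w', _, hwuniq⟩ := hM (M.edge_vert hz1)
          have hzy : z = y := by rw [hwuniq z hz1, hwuniq y hmy]
          exact absurd hy (hzy ▸ hz2)
        · rcases huniq z hz1 with rfl | rfl
          · rfl
          · exact absurd hmy hz2
    · obtain ⟨z, hz, hzuniq⟩ := hM hx
      refine ⟨z, (hNadj _ _).mpr (Or.inl ⟨hz, fun h => hxs (hCsupp h)⟩), ?_⟩
      intro z' hz'
      rcases (hNadj _ _).mp hz' with ⟨h, _⟩ | ⟨h, _⟩
      · exact hzuniq z' h
      · exact absurd (hCsupp h) hxs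
  have hNM : N = M := hUR.2 N hNmatch rfl
  obtain ⟨b, y, hby, hb, hy, _⟩ := cycle_two_edges_at cyc hcyc cyc.start_mem_support
  have hiff := haltM hby hb hy
  by_cases hmb : M.Adj w b
  · have hmy : ¬ M.Adj w y := hiff.mp hmb
    have hNy : N.Adj w y := (hNadj _ _).mpr (Or.inr ⟨hy, hmy⟩)
    rw [hNM] at hNy
    exact hmy hNy
  · have hNb : N.Adj w b := (hNadj _ _).mpr (Or.inr ⟨hb, hmb⟩)
    rw [hNM] at hNb
    exact hmb hNb
end
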